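/- In H(n,k,p_n) with λ_n = (1/2)(log n + log log n) + w for fixed w ∈ ℝ and k ≥ 3, the expected number of triples of distinct vertices with identical nonempty stars is O(n λ_n e^{−3λ_n}) = O(n^{−1/2}(log n)^{−1/2}), hence tends to 0; consequently the probability that some unit has size at least 3 tends to 0. -/

import Mathlib

/-- All `k`-element subsets of `[n]`, the possible hyperedges of a `k`-uniform
hypergraph on `n` vertices. -/
def kSets (n k : ℕ) : Finset (Finset (Fin n)) :=
  (Finset.univ : Finset (Fin n)).powersetCard k

/-- The probability, in the random hypergraph `H(n,k,p)` where each `k`-subset is a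
hyperedge independently with probability `p`, of a given edge set `E`. -/
noncomputable def hweight (n k : ℕ) (p : ℝ) (E : Finset (Finset (Fin n))) : ℝ :=
  if E ⊆ kSets n k then p ^ E.card * (1 - p) ^ ((kSets n k).card - E.card) else 0

open Classical in
/-- The probability of an event `A` under `H(n,k,p)`. -/
noncomputable def hprob (n k : ℕ) (p : ℝ) (A : Finset (Finset (Fin n)) → Prop) : ℝ :=
  ∑ E : Finset (Finset (Fin n)), if A E then hweight n k p E else 0

/-- The expectation of a random variable `f` under `H(n,k,p)`. -/
noncomputable def hexp (n k : ℕ) (p : ℝ) (f : Finset (Finset (Fin n)) → ℝ) : ℝ :=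
  ∑ E : Finset (Finset (Fin n)), hweight n k p E * f E

/-- The star of a vertex `v`: the set of hyperedges of `E` containing `v`. -/
def hstar {n : ℕ} (E : Finset (Finset (Fin n))) (v : Fin n) : Finset (Finset (Fin n)) :=
  E.filter (fun e => v ∈ e)

/-- `X_r`: the number of unordered pairs of (distinct) vertices with identical stars of
size exactly `r` (star-collisions of support size `r`). -/
def Xr (n r : ℕ) (E : Finset (Finset (Fin n))) : ℕ :=
  ((Finset.univ : Finset (Fin n)).powersetCard 2 |>.filter
    (fun P => (∀ u ∈ P, ∀ v ∈ P, hstar E u = hstar E v) ∧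
      ∀ u ∈ P, (hstar E u).card = r)).card

open Filter Asymptotics

/-- The number of 3-element sets of vertices all having the same nonempty star. -/
def tripleCount (n : ℕ) (E : Finset (Finset (Fin n))) : ℕ :=
  ((Finset.univ : Finset (Fin n)).powersetCard 3 |>.filter
    (fun P => (∀ u ∈ P, ∀ v ∈ P, hstar E u = hstar E v) ∧
      ∀ u ∈ P, hstar E u ≠ ∅)).card

lemma hprob_eq {n k : ℕ} {p : ℝ} (A : Finset (Finset (Fin n)) → Prop) [DecidablePred A] :
    hprob n k p A = ∑ E : Finset (Finset (Fin n)), if A E then hweight n k p E else 0 := by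
  unfold hprob
  exact Finset.sum_congr rfl fun E _ => by split_ifs <;> rfl

open Finset in
lemma hlayer (n k : ℕ) (p : ℝ) (A B : Finset (Finset (Fin n)))
    (hA : A ⊆ kSets n k) (hB : B ⊆ kSets n k) (hAB : Disjoint A B) :
    hprob n k p (fun E => A ⊆ E ∧ Disjoint B E)
      = p ^ A.card * (1 - p) ^ B.card := by
  classical
  rw [hprob_eq]
  set K := kSets n k with hK
  have h0 : ∀ E ∈ (Finset.univ : Finset (Finset (Finset (Fin n)))), E ∉ K.powerset →
      (if A ⊆ E ∧ Disjoint B E then hweight n k p E else 0) = 0 := by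
    intro E _ hE
    rw [mem_powerset] at hE
    have : hweight n k p E = 0 := by unfold hweight; exact if_neg hE
    split <;> simp [this]
  rw [← Finset.sum_subset (subset_univ K.powerset) h0, ← Finset.sum_filter]
  set T := K \ (A ∪ B) with hT
  have hTcard : T.card = K.card - A.card - B.card := by
    rw [hT, card_sdiff_of_subset (union_subset hA hB), card_union_of_disjoint hAB]
    omega
  have hstep : ∑ E ∈ (K.powerset.filter (fun E => A ⊆ E ∧ Disjoint B E)), hweight n k p E
      = ∑ F ∈ T.powerset, p ^ (F.card + A.card) * (1 - p) ^ (T.card - F.card + B.card) := by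
    refine Finset.sum_nbij' (fun E => E \ A) (fun F => F ∪ A) ?_ ?_ ?_ ?_ ?_
    · intro E hE
      simp only [mem_filter, mem_powerset] at hE ⊢
      obtain ⟨hEK, hAE, hBE⟩ := hE
      intro x hx
      simp only [Finset.mem_sdiff] at hx
      simp only [hT, Finset.mem_sdiff, mem_union]
      exact ⟨hEK hx.1, fun h => h.elim hx.2 (fun hxB => (disjoint_left.mp hBE) hxB hx.1)⟩
    · intro F hF
      simp only [mem_powerset] at hF
      simp only [mem_filter, mem_powerset]
      have hFK : F ⊆ K := hF.trans (sdiff_subset)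
      refine ⟨union_subset hFK hA, subset_union_right, ?_⟩
      rw [disjoint_union_right]
      constructor
      · exact Finset.disjoint_left.mpr (fun x hxB hxF => by
          have := hF hxF; rw [hT, Finset.mem_sdiff, mem_union] at this; exact this.2 (Or.inr hxB))
      · exact hAB.symm
    · intro E hE
      simp only [mem_filter, mem_powerset] at hE
      exact sdiff_union_of_subset hE.2.1
    · intro F hF
      simp only [mem_powerset] at hF
      apply union_sdiff_cancel_right
      exact Finset.disjoint_left.mpr (fun x hxF hxA => by
        have := hF hxF; rw [hT, Finset.mem_sdiff, mem_union] at this; exact this.2 (Or.inl hxA))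
    · intro E hE
      simp only [mem_filter, mem_powerset] at hE
      obtain ⟨hEK, hAE, hBE⟩ := hE
      have hdisj : Disjoint (E \ A) A := sdiff_disjoint
      have hcard : (E \ A).card + A.card = E.card := by
        rw [card_sdiff_of_subset hAE]; have := card_le_card hAE; omega
      have hEsub : E \ A ⊆ T := by
        intro x hx
        simp only [Finset.mem_sdiff] at hx
        simp only [hT, Finset.mem_sdiff, mem_union]
        exact ⟨hEK hx.1, fun h => h.elim hx.2 (fun hxB => (disjoint_left.mp hBE) hxB hx.1)⟩
      have hcard2 : T.card - (E \ A).card + B.card = K.card - E.card := by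
        have h1 : (E \ A).card ≤ T.card := card_le_card hEsub
        have h2 : E.card ≤ K.card := card_le_card hEK
        have h3 : B.card ≤ K.card := card_le_card hB
        have h4 : A.card + B.card ≤ K.card := by
          rw [← card_union_of_disjoint hAB]; exact card_le_card (union_subset hA hB)
        omega
      simp [hweight, hEK, hcard, hcard2, hK, show E ⊆ kSets n k from hEK]
  rw [hstep]
  have expand : ∀ F ∈ T.powerset, p ^ (F.card + A.card) * (1 - p) ^ (T.card - F.card + B.card)
      = (p ^ A.card * (1 - p) ^ B.card) * (p ^ F.card * (1 - p) ^ (T.card - F.card)) := by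
    intro F _; ring
  rw [Finset.sum_congr rfl expand, ← Finset.mul_sum]
  have key : ∑ F ∈ T.powerset, p ^ F.card * (1 - p) ^ (T.card - F.card) = 1 := by
    have h1 := Finset.prod_add (fun _ : Finset (Fin n) => p) (fun _ => (1:ℝ) - p) T
    simp only [prod_const] at h1
    have h2 : ∀ F ∈ T.powerset, p ^ F.card * (1-p) ^ (T.card - F.card)
        = p ^ F.card * (1-p) ^ (T \ F).card := by
      intro F hF; rw [card_sdiff_of_subset (mem_powerset.mp hF)]
    rw [Finset.sum_congr rfl h2, ← h1]
    norm_num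
  rw [key, mul_one]

lemma hweight_nonneg {n k : ℕ} {p : ℝ} (hp0 : 0 ≤ p) (hp1 : p ≤ 1)
    (E : Finset (Finset (Fin n))) : 0 ≤ hweight n k p E := by
  unfold hweight
  split
  · exact mul_nonneg (pow_nonneg hp0 _) (pow_nonneg (by linarith) _)
  · exact le_refl 0

lemma hweight_eq_zero {n k : ℕ} {p : ℝ} {E : Finset (Finset (Fin n))}
    (h : ¬ E ⊆ kSets n k) : hweight n k p E = 0 := by simp [hweight, h]

lemma hprob_nonneg {n k : ℕ} {p : ℝ} (hp0 : 0 ≤ p) (hp1 : p ≤ 1)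
    (A : Finset (Finset (Fin n)) → Prop) : 0 ≤ hprob n k p A := by
  unfold hprob
  refine Finset.sum_nonneg fun E _ => ?_
  split
  · exact hweight_nonneg hp0 hp1 E
  · exact le_refl 0

lemma hexp_nonneg {n k : ℕ} {p : ℝ} (hp0 : 0 ≤ p) (hp1 : p ≤ 1)
    {f : Finset (Finset (Fin n)) → ℝ} (hf : ∀ E, 0 ≤ f E) : 0 ≤ hexp n k p f := by
  unfold hexp
  exact Finset.sum_nonneg fun E _ => mul_nonneg (hweight_nonneg hp0 hp1 E) (hf E)

lemma markov {n k : ℕ} {p : ℝ} (hp0 : 0 ≤ p) (hp1 : p ≤ 1)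
    (X : Finset (Finset (Fin n)) → ℕ) :
    hprob n k p (fun E => 1 ≤ X E) ≤ hexp n k p (fun E => (X E : ℝ)) := by
  unfold hprob hexp
  refine Finset.sum_le_sum fun E _ => ?_
  have hw := hweight_nonneg (k := k) hp0 hp1 E
  split
  · next h =>
      have : (1 : ℝ) ≤ (X E : ℝ) := by exact_mod_cast h
      nlinarith
  · positivity

open Classical in
lemma hprob_le_sum {n k : ℕ} {p : ℝ} (hp0 : 0 ≤ p) (hp1 : p ≤ 1)
    {γ : Type*} (T : Finset γ) (A : Finset (Finset (Fin n)) → Prop)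
    (Φ : γ → Finset (Finset (Fin n)) → Prop)
    (h : ∀ E, E ⊆ kSets n k → A E → ∃ e ∈ T, Φ e E) :
    hprob n k p A ≤ ∑ e ∈ T, hprob n k p (Φ e) := by
  unfold hprob
  rw [Finset.sum_comm]
  refine Finset.sum_le_sum fun E _ => ?_
  have hw := hweight_nonneg (k := k) hp0 hp1 E
  by_cases hA : A E
  · by_cases hEK : E ⊆ kSets n k
    · obtain ⟨e, heT, he⟩ := h E hEK hA
      rw [if_pos hA]
      have step := Finset.single_le_sum
        (f := fun g => if Φ g E then hweight n k p E else 0)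
        (fun g _ => by beta_reduce; split <;> [exact hw; exact le_refl 0]) heT
      simpa [if_pos he] using step
    · rw [if_pos hA, hweight_eq_zero hEK]
      refine Finset.sum_nonneg fun g _ => ?_
      split <;> norm_num
  · rw [if_neg hA]
    refine Finset.sum_nonneg fun g _ => ?_
    split
    · exact hw
    · exact le_refl 0

open Classical in
lemma hexp_tripleCount (n k : ℕ) (p : ℝ) :
    hexp n k p (fun E => (tripleCount n E : ℝ))
      = ∑ P ∈ (Finset.univ : Finset (Fin n)).powersetCard 3,
          hprob n k p (fun E => (∀ u ∈ P, ∀ v ∈ P, hstar E u = hstar E v) ∧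
            ∀ u ∈ P, hstar E u ≠ ∅) := by
  unfold hexp hprob tripleCount
  rw [Finset.sum_comm]
  refine Finset.sum_congr rfl fun E _ => ?_
  simp only [Finset.card_filter, Nat.cast_sum, Finset.mul_sum]
  refine Finset.sum_congr rfl fun P _ => ?_
  push_cast
  rw [mul_ite, mul_one, mul_zero]
  split_ifs with h1 h2 <;> simp_all

open Finset in

lemma card_T_le (n k : ℕ) (hk : 3 ≤ k) (P : Finset (Fin n)) (hP : P.card = 3) :
    ((kSets n k).filter (fun e => P ⊆ e)).card ≤ Nat.choose n (k - 3) := by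
  classical
  have h := Finset.card_le_card_of_injOn (f := fun e => e \ P)
    (s := (kSets n k).filter (fun e => P ⊆ e))
    (t := (Finset.univ : Finset (Fin n)).powersetCard (k - 3)) ?_ ?_
  · simpa [Finset.card_powersetCard] using h
  · intro e he
    simp only [Finset.mem_coe, mem_filter, kSets, mem_powersetCard] at he
    obtain ⟨⟨_, hcard⟩, hPe⟩ := he
    simp only [Finset.mem_coe, mem_powersetCard]
    exact ⟨subset_univ _, by rw [card_sdiff_of_subset hPe, hcard, hP]⟩
  · intro e1 h1 e2 h2 heq
    simp only [coe_filter, Set.mem_setOf_eq] at h1 h2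
    have := congrArg (· ∪ P) heq
    simpa [sdiff_union_of_subset h1.2, sdiff_union_of_subset h2.2] using this

open Finset in
lemma card_S_ge (n k : ℕ) (hk : 3 ≤ k) (P : Finset (Fin n)) (hP : P.card = 3) :
    3 * Nat.choose (n - 3) (k - 1)
      ≤ ((kSets n k).filter (fun f => (∃ u ∈ P, u ∈ f) ∧ ¬ P ⊆ f)).card := by
  classical
  set S := (kSets n k).filter (fun f => (∃ u ∈ P, u ∈ f) ∧ ¬ P ⊆ f) with hS
  set D : Fin n → Finset (Finset (Fin n)) :=
    fun x => (kSets n k).filter (fun f => f ∩ P = {x}) with hD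
  have hDS : ∀ x ∈ P, D x ⊆ S := by
    intro x hxP f hf
    simp only [hD, mem_filter] at hf
    obtain ⟨hfK, hfP⟩ := hf
    have hxf : x ∈ f := by
      have : x ∈ f ∩ P := hfP ▸ mem_singleton_self x
      exact (mem_inter.mp this).1
    have hy : ∃ y ∈ P, y ≠ x := by
      by_contra hcon
      push_neg at hcon
      have : P ⊆ {x} := fun y hy => mem_singleton.mpr (hcon y hy)
      have := card_le_card this
      simp [hP] at this
    obtain ⟨y, hyP, hyx⟩ := hy
    simp only [hS, mem_filter]
    refine ⟨hfK, ⟨x, hxP, hxf⟩, fun hPf => ?_⟩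
    have : y ∈ f ∩ P := mem_inter.mpr ⟨hPf hyP, hyP⟩
    rw [hfP, mem_singleton] at this
    exact hyx this
  have hDcard : ∀ x ∈ P, Nat.choose (n - 3) (k - 1) ≤ (D x).card := by
    intro x hxP
    have h := Finset.card_le_card_of_injOn (f := fun t => insert x t)
      (s := ((Finset.univ : Finset (Fin n)) \ P).powersetCard (k - 1))
      (t := D x) ?_ ?_
    · refine le_trans (le_of_eq ?_) h
      rw [Finset.card_powersetCard, card_sdiff_of_subset (subset_univ P), hP, card_univ,
        Fintype.card_fin]
    · intro t ht
      simp only [Finset.mem_coe, mem_powersetCard] at ht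
      obtain ⟨htsub, htcard⟩ := ht
      have hxt : x ∉ t := fun hxt => (Finset.mem_sdiff.mp (htsub hxt)).2 hxP
      simp only [Finset.mem_coe, hD, mem_filter, kSets, mem_powersetCard]
      refine ⟨⟨subset_univ _, ?_⟩, ?_⟩
      · rw [card_insert_of_notMem hxt, htcard]; omega
      · ext y
        simp only [mem_inter, mem_insert, mem_singleton]
        constructor
        · rintro ⟨hy1 | hy1, hy2⟩
          · exact hy1
          · exact absurd hy2 ((Finset.mem_sdiff.mp (htsub hy1)).2)
        · rintro rfl; exact ⟨Or.inl rfl, hxP⟩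
    · intro t1 h1 t2 h2 heq
      rw [Finset.mem_coe, mem_powersetCard] at h1 h2
      have hx1 : x ∉ t1 := fun hx => (Finset.mem_sdiff.mp (h1.1 hx)).2 hxP
      have hx2 : x ∉ t2 := fun hx => (Finset.mem_sdiff.mp (h2.1 hx)).2 hxP
      have := congrArg (Finset.erase · x) heq
      simpa [Finset.erase_insert hx1, Finset.erase_insert hx2] using this
  obtain ⟨a, b, c, hab, hac, hbc, rfl⟩ := Finset.card_eq_three.mp hP
  have haP : a ∈ ({a, b, c} : Finset (Fin n)) := by simp
  have hbP : b ∈ ({a, b, c} : Finset (Fin n)) := by simp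
  have hcP : c ∈ ({a, b, c} : Finset (Fin n)) := by simp
  have hdisj : ∀ x y : Fin n, x ≠ y → Disjoint (D x) (D y) := by
    intro x y hxy
    refine Finset.disjoint_left.mpr fun f hfx hfy => ?_
    simp only [hD, mem_filter] at hfx hfy
    rw [hfx.2] at hfy
    exact hxy (Finset.singleton_injective hfy.2)
  have hsub : D a ∪ (D b ∪ D c) ⊆ S :=
    union_subset (hDS a haP) (union_subset (hDS b hbP) (hDS c hcP))
  have hcard : (D a ∪ (D b ∪ D c)).card = (D a).card + ((D b).card + (D c).card) := by
    rw [card_union_of_disjoint, card_union_of_disjoint (hdisj b c hbc)]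
    rw [disjoint_union_right]
    exact ⟨hdisj a b hab, hdisj a c hac⟩
  calc 3 * Nat.choose (n - 3) (k - 1)
      ≤ (D a).card + ((D b).card + (D c).card) := by
        have := hDcard a haP; have := hDcard b hbP; have := hDcard c hcP; omega
    _ = (D a ∪ (D b ∪ D c)).card := hcard.symm
    _ ≤ S.card := card_le_card hsub

open Finset Classical in
lemma per_triple (n k : ℕ) (p : ℝ) (hp0 : 0 ≤ p) (hp1 : p ≤ 1) (hk : 3 ≤ k)
    (P : Finset (Fin n)) (hP : P.card = 3) :
    hprob n k p (fun E => (∀ u ∈ P, ∀ v ∈ P, hstar E u = hstar E v) ∧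
        ∀ u ∈ P, hstar E u ≠ ∅)
      ≤ (Nat.choose n (k - 3) : ℝ) * (p * (1 - p) ^ (3 * Nat.choose (n - 3) (k - 1))) := by
  classical
  set S := (kSets n k).filter (fun f => (∃ u ∈ P, u ∈ f) ∧ ¬ P ⊆ f) with hSdef
  set T := (kSets n k).filter (fun e => P ⊆ e) with hTdef
  have himpl : ∀ E, E ⊆ kSets n k →
      ((∀ u ∈ P, ∀ v ∈ P, hstar E u = hstar E v) ∧ ∀ u ∈ P, hstar E u ≠ ∅) →
      ∃ e ∈ T, ({e} ⊆ E ∧ Disjoint S E) := by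
    rintro E hEK ⟨hsame, hne⟩
    have hPne : P.Nonempty := Finset.card_pos.mp (by omega)
    obtain ⟨u, huP⟩ := hPne
    have hne' : (hstar E u).Nonempty := Finset.nonempty_iff_ne_empty.mpr (hne u huP)
    obtain ⟨e, he⟩ := hne'
    rw [hstar, mem_filter] at he
    obtain ⟨heE, hue⟩ := he
    have hPe : P ⊆ e := by
      intro v hvP
      have hv := hsame u huP v hvP
      have hmem : e ∈ hstar E v := hv ▸ (by rw [hstar, mem_filter]; exact ⟨heE, hue⟩)
      rw [hstar, mem_filter] at hmem
      exact hmem.2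
    refine ⟨e, ?_, ?_, ?_⟩
    · rw [hTdef, mem_filter]; exact ⟨hEK heE, hPe⟩
    · simpa using heE
    · refine Finset.disjoint_left.mpr fun f hfS hfE => ?_
      rw [hSdef, mem_filter] at hfS
      obtain ⟨-, ⟨u', hu'P, hu'f⟩, hnPf⟩ := hfS
      apply hnPf
      intro v hvP
      have hv := hsame u' hu'P v hvP
      have hmem : f ∈ hstar E v := hv ▸ (by rw [hstar, mem_filter]; exact ⟨hfE, hu'f⟩)
      rw [hstar, mem_filter] at hmem
      exact hmem.2
  have hub := hprob_le_sum hp0 hp1 T _ (fun e E => {e} ⊆ E ∧ Disjoint S E) himpl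
  have heach : ∀ e ∈ T, hprob n k p (fun E => {e} ⊆ E ∧ Disjoint S E)
      = p ^ 1 * (1 - p) ^ S.card := by
    intro e heT
    rw [hTdef, mem_filter] at heT
    have hl := hlayer n k p {e} S (by simpa using heT.1) (filter_subset _ _) ?_
    · simpa using hl
    · rw [Finset.disjoint_singleton_left, hSdef, mem_filter]
      rintro ⟨-, -, hnot⟩
      exact hnot heT.2
  refine le_trans hub ?_
  rw [Finset.sum_congr rfl heach, Finset.sum_const, nsmul_eq_mul]
  have h1 : (T.card : ℝ) ≤ (Nat.choose n (k - 3) : ℝ) := by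
    exact_mod_cast card_T_le n k hk P hP
  have h2 : (1 - p) ^ S.card ≤ (1 - p) ^ (3 * Nat.choose (n - 3) (k - 1)) :=
    pow_le_pow_of_le_one (by linarith) (by linarith) (card_S_ge n k hk P hP)
  rw [pow_one]
  apply mul_le_mul h1 (mul_le_mul_of_nonneg_left h2 hp0)
    (mul_nonneg hp0 (pow_nonneg (by linarith) _)) (by positivity)


lemma global_bound (n k : ℕ) (p : ℝ) (hp0 : 0 ≤ p) (hp1 : p ≤ 1) (hk : 3 ≤ k) :
    hexp n k p (fun E => (tripleCount n E : ℝ))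
      ≤ (n : ℝ) ^ 3 * ((Nat.choose n (k - 3) : ℝ)
          * (p * (1 - p) ^ (3 * Nat.choose (n - 3) (k - 1)))) := by
  classical
  rw [hexp_tripleCount]
  have hstep := Finset.sum_le_card_nsmul ((Finset.univ : Finset (Fin n)).powersetCard 3) _
    ((Nat.choose n (k - 3) : ℝ) * (p * (1 - p) ^ (3 * Nat.choose (n - 3) (k - 1))))
    (fun P hP => per_triple n k p hp0 hp1 hk P (Finset.mem_powersetCard.mp hP).2)
  refine le_trans hstep ?_
  rw [Finset.card_powersetCard, Finset.card_univ, Fintype.card_fin, nsmul_eq_mul]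
  have hb : 0 ≤ (Nat.choose n (k - 3) : ℝ)
      * (p * (1 - p) ^ (3 * Nat.choose (n - 3) (k - 1))) := by
    have := pow_nonneg (by linarith : (0:ℝ) ≤ 1 - p) (3 * Nat.choose (n - 3) (k - 1))
    positivity
  refine mul_le_mul_of_nonneg_right ?_ hb
  have := Nat.choose_le_pow n 3
  exact_mod_cast this

set_option maxHeartbeats 2000000 in
/-- In `H(n,k,p_n)` with `λ_n = (1/2)(log n + log log n) + w`, the expected number of
triples of distinct vertices with identical nonempty stars is
`O(n^{-1/2} (log n)^{-1/2})`, hence tends to 0; consequently the probability that some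
unit has size at least 3 tends to 0. -/
theorem stmt17 (k : ℕ) (hk : 3 ≤ k) (w : ℝ) (p : ℕ → ℝ)
    (hp : ∀ᶠ n in atTop, 0 ≤ p n ∧ p n ≤ 1)
    (hlam : ∀ᶠ n in atTop, ((n - 1).choose (k - 1) : ℝ) * p n
      = (1 / 2) * (Real.log n + Real.log (Real.log n)) + w) :
    (fun n => hexp n k (p n) (fun E => (tripleCount n E : ℝ)))
        =O[atTop] (fun n => (n : ℝ) ^ (-(1 / 2 : ℝ)) * Real.log n ^ (-(1 / 2 : ℝ)))
    ∧ Tendsto (fun n => hexp n k (p n) (fun E => (tripleCount n E : ℝ)))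
        atTop (nhds 0)
    ∧ Tendsto (fun n => hprob n k (p n) (fun E => 1 ≤ tripleCount n E))
        atTop (nhds 0) := by
  set C : ℝ := (Nat.factorial (k - 1) : ℝ) * 2 ^ (k - 1) * Real.exp 1
      * Real.exp (-(3 * w)) with hCdef
  have hCpos : (0 : ℝ) < C := by rw [hCdef]; positivity
  clear_value C
  have ev1 : ∀ᶠ n : ℕ in atTop, 16 + 4 * |w| ≤ Real.log n :=
    (Real.tendsto_log_atTop.comp tendsto_natCast_atTop_atTop).eventually_ge_atTop _
  have ev4 : ∀ᶠ n : ℕ in atTop, Real.log (Real.log n) ≤ (1 / 2) * Real.log n := by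
    have h := Real.isLittleO_log_id_atTop.def (by norm_num : (0:ℝ) < 1/2)
    have h2 := Real.tendsto_log_atTop.eventually h
    have h3 := (tendsto_natCast_atTop_atTop (R := ℝ)).eventually
      (h2.and (eventually_ge_atTop 1))
    filter_upwards [h3] with n hn
    obtain ⟨hb, h1⟩ := hn
    have hl0 : 0 ≤ Real.log (n : ℝ) := Real.log_nonneg h1
    calc Real.log (Real.log n) ≤ |Real.log (Real.log n)| := le_abs_self _
      _ ≤ 1/2 * |Real.log (n:ℝ)| := by simpa [Real.norm_eq_abs] using hb
      _ = 1/2 * Real.log n := by rw [abs_of_nonneg hl0]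
  have ev2 : ∀ᶠ n : ℕ in atTop, 6 * (k:ℝ) * Real.log n ≤ (n:ℝ) - 1 := by
    have hkpos : (0:ℝ) < (k:ℝ) := by exact_mod_cast (by omega : 0 < k)
    have h := Real.isLittleO_log_id_atTop.def (c := 1/(12*(k:ℝ))) (by positivity)
    have h3 := (tendsto_natCast_atTop_atTop (R := ℝ)).eventually h
    filter_upwards [h3, eventually_ge_atTop 2] with n hn hn2
    have hn2' : (2:ℝ) ≤ (n:ℝ) := by exact_mod_cast hn2
    have hlog : Real.log n ≤ 1/(12*(k:ℝ)) * (n:ℝ) := by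
      have := le_trans (le_abs_self _) hn
      simpa [Real.norm_eq_abs, abs_of_nonneg (by linarith : (0:ℝ) ≤ (n:ℝ))] using this
    have h6 : 6*(k:ℝ)*Real.log n ≤ (n:ℝ)/2 := by
      calc 6*(k:ℝ)*Real.log n ≤ 6*(k:ℝ)*(1/(12*(k:ℝ)) * (n:ℝ)) := by
            exact mul_le_mul_of_nonneg_left hlog (by positivity)
        _ = (n:ℝ)/2 := by field_simp; ring
    linarith
  have ev3 : ∀ᶠ n : ℕ in atTop, 2*k + 3 ≤ n := eventually_ge_atTop _
  have key : ∀ᶠ n : ℕ in atTop,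
      0 ≤ hexp n k (p n) (fun E => (tripleCount n E : ℝ)) ∧
      hexp n k (p n) (fun E => (tripleCount n E : ℝ))
        ≤ C * ((n : ℝ) ^ (-(1 / 2 : ℝ)) * Real.log n ^ (-(1 / 2 : ℝ))) ∧
      (0:ℝ) < (n : ℝ) ^ (-(1 / 2 : ℝ)) * Real.log n ^ (-(1 / 2 : ℝ)) := by
    filter_upwards [hp, hlam, ev1, ev2, ev3, ev4] with n hpn hlamn h1 h2 h3 h4
    set L := Real.log n with hLdef
    set LL := Real.log L with hLLdef
    set lam := (1/2 : ℝ) * (L + LL) + w with hlamdef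
    clear_value L LL lam
    obtain ⟨hp0, hp1⟩ := hpn
    have hn9 : (9:ℝ) ≤ (n:ℝ) := by exact_mod_cast (by omega : 9 ≤ n)
    have hn0 : (0:ℝ) < (n:ℝ) := by linarith
    have hL16 : 16 ≤ L := by have := abs_nonneg w; linarith
    have hL0 : (0:ℝ) < L := by linarith
    have hLL0 : 0 ≤ LL := by rw [hLLdef]; exact Real.log_nonneg (by linarith)
    have hwle : w ≤ |w| := le_abs_self w
    have hwge : -|w| ≤ w := neg_abs_le w
    have hlam0 : 0 ≤ lam := by rw [hlamdef]; linarith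
    have hlamL : lam ≤ L := by rw [hlamdef]; linarith
    have hk3 : (3:ℝ) ≤ (k:ℝ) := by exact_mod_cast hk
    have hc1posN : 0 < (n-1).choose (k-1) := Nat.choose_pos (by omega)
    set c1 : ℝ := ((n-1).choose (k-1) : ℝ) with hc1def
    have hc1pos : 0 < c1 := by rw [hc1def]; exact_mod_cast hc1posN
    clear_value c1
    have hplam : c1 * p n = lam := hlamn
    have hpn_eq : p n = lam / c1 := by
      rw [eq_div_iff hc1pos.ne']; linarith [hplam]
    have h1p0 : (0:ℝ) ≤ 1 - p n := by linarith
    -- upper bound on binomial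
    have hB1 : (Nat.choose n (k-3) : ℝ) ≤ (n:ℝ)^(k-3) := by
      exact_mod_cast Nat.choose_le_pow n (k-3)
    -- lower bound on c1 and upper bound on p
    have hfacpos : (0:ℝ) < (Nat.factorial (k-1) : ℝ) := by
      exact_mod_cast Nat.factorial_pos (k-1)
    have hD : ((n:ℝ)/2)^(k-1) / (Nat.factorial (k-1) : ℝ) ≤ c1 := by
      have t1 := Nat.pow_le_choose (α := ℝ) (k-1) (n-1)
      have harg : n - 1 + 1 - (k-1) = n - k + 1 := by omega
      rw [harg] at t1
      have hhalf : (n:ℝ)/2 ≤ ((n - k + 1 : ℕ) : ℝ) := by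
        have hc : ((n - k + 1 : ℕ) : ℝ) = (n:ℝ) - (k:ℝ) + 1 := by
          push_cast [Nat.cast_sub (by omega : k ≤ n)]; ring
        have h2k : (2:ℝ)*(k:ℝ) + 3 ≤ (n:ℝ) := by exact_mod_cast h3
        rw [hc]; linarith
      have t2 : ((n:ℝ)/2)^(k-1) ≤ (((n - k + 1 : ℕ) : ℝ))^(k-1) :=
        pow_le_pow_left₀ (by positivity) hhalf _
      calc ((n:ℝ)/2)^(k-1) / (Nat.factorial (k-1) : ℝ)
          ≤ (((n - k + 1 : ℕ) : ℝ))^(k-1) / (Nat.factorial (k-1) : ℝ) := by gcongr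
        _ ≤ c1 := by rw [hc1def]; exact t1
    have hDpos : (0:ℝ) < ((n:ℝ)/2)^(k-1) / (Nat.factorial (k-1):ℝ) := by positivity
    have hB2 : p n ≤ lam * (Nat.factorial (k-1) : ℝ) * 2^(k-1) / (n:ℝ)^(k-1) := by
      have hstep : lam / c1 ≤ lam / (((n:ℝ)/2)^(k-1) / (Nat.factorial (k-1):ℝ)) :=
        div_le_div_of_nonneg_left hlam0 hDpos hD
      rw [hpn_eq]
      refine le_trans hstep (le_of_eq ?_)
      rw [div_pow]
      have hx1 : ((n:ℝ))^(k-1) ≠ 0 := pow_ne_zero _ hn0.ne'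
      have hx2 : ((2:ℝ))^(k-1) ≠ 0 := pow_ne_zero _ two_ne_zero
      have hx3 : (Nat.factorial (k-1):ℝ) ≠ 0 := hfacpos.ne'
      field_simp
    -- exponential bound
    set M := 3 * Nat.choose (n-3) (k-1) with hMdef
    set A2 : ℝ := ((n-2).choose (k-2) : ℝ) with hA2def
    set A3 : ℝ := ((n-3).choose (k-1) : ℝ) with hA3def
    have hMcast : (M:ℝ) = 3 * A3 := by rw [hMdef, hA3def]; push_cast; ring
    clear_value M A2 A3
    have hΔ : c1 ≤ A3 + 2*A2 := by
      have hnat : (n-1).choose (k-1) ≤ (n-3).choose (k-1) + 2*((n-2).choose (k-2)) := by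
        obtain ⟨m, rfl⟩ : ∃ m, n = m + 3 := ⟨n - 3, by omega⟩
        obtain ⟨j, rfl⟩ : ∃ j, k = j + 3 := ⟨k - 3, by omega⟩
        have e1 : m + 3 - 1 = m + 2 := by omega
        have e2 : m + 3 - 3 = m := by omega
        have e3 : m + 3 - 2 = m + 1 := by omega
        have e4 : j + 3 - 1 = j + 2 := by omega
        have e5 : j + 3 - 2 = j + 1 := by omega
        rw [e1, e2, e3, e4, e5]
        have p1 : (m+2).choose (j+2) = (m+1).choose (j+1) + (m+1).choose (j+2) :=
          Nat.choose_succ_succ (m+1) (j+1)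
        have p2 : (m+1).choose (j+2) = m.choose (j+1) + m.choose (j+2) :=
          Nat.choose_succ_succ m (j+1)
        have p3 : m.choose (j+1) ≤ (m+1).choose (j+1) :=
          Nat.choose_le_choose (j+1) (Nat.le_succ m)
        omega
      rw [hc1def, hA3def, hA2def]
      exact_mod_cast hnat
    have hid : ((n:ℝ) - 1) * A2 = ((k:ℝ) - 1) * c1 := by
      have hnat : (n-1) * ((n-2).choose (k-2)) = (k-1) * ((n-1).choose (k-1)) := by
        obtain ⟨m, rfl⟩ : ∃ m, n = m + 3 := ⟨n - 3, by omega⟩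
        obtain ⟨j, rfl⟩ : ∃ j, k = j + 3 := ⟨k - 3, by omega⟩
        have e1 : m + 3 - 1 = m + 2 := by omega
        have e3 : m + 3 - 2 = m + 1 := by omega
        have e4 : j + 3 - 1 = j + 2 := by omega
        have e5 : j + 3 - 2 = j + 1 := by omega
        rw [e1, e3, e4, e5]
        have hs := Nat.add_one_mul_choose_eq (m+1) (j+1)
        calc (m + 2) * ((m+1).choose (j+1)) = (m+1).succ * ((m+1).choose (j+1)) := rfl
          _ = (m+2).choose (j+2) * (j+2) := hs
          _ = (j + 2) * ((m+2).choose (j+2)) := by ring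
      have hcast := congrArg (fun x : ℕ => (x : ℝ)) hnat
      push_cast [Nat.cast_sub (by omega : 1 ≤ n), Nat.cast_sub (by omega : 1 ≤ k)] at hcast
      rw [hc1def, hA2def]
      push_cast
      linarith [hcast]
    have s1 : lam ≤ p n * A3 + 2 * (p n * A2) := by
      have hm := mul_le_mul_of_nonneg_right hΔ hp0
      calc lam = c1 * p n := hplam.symm
        _ ≤ (A3 + 2*A2) * p n := hm
        _ = p n * A3 + 2*(p n * A2) := by ring
    have hn1 : (0:ℝ) < (n:ℝ) - 1 := by linarith
    have s2 : ((n:ℝ)-1) * (p n * A2) = ((k:ℝ)-1) * lam := by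
      calc ((n:ℝ)-1) * (p n * A2) = p n * (((n:ℝ)-1) * A2) := by ring
        _ = p n * (((k:ℝ)-1) * c1) := by rw [hid]
        _ = ((k:ℝ)-1) * (c1 * p n) := by ring
        _ = ((k:ℝ)-1) * lam := by rw [hplam]
    have s4 : 2 * (p n * A2) ≤ 1/3 := by
      have s3 : p n * A2 = ((k:ℝ)-1) * lam / ((n:ℝ)-1) := by
        rw [eq_div_iff hn1.ne']; linarith [s2]
      rw [s3, show (2:ℝ) * (((k:ℝ)-1)*lam/((n:ℝ)-1)) = (2*((k:ℝ)-1)*lam)/((n:ℝ)-1) by ring,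
        div_le_iff₀ hn1]
      have t : ((k:ℝ)-1)*lam ≤ (k:ℝ)*L := mul_le_mul (by linarith) hlamL hlam0 (by linarith)
      linarith only [t, h2]
    have hpM : 3*lam - 1 ≤ p n * (M:ℝ) := by
      rw [hMcast, show p n * (3*A3) = 3*(p n * A3) by ring]
      linarith [s1, s4]
    have hB3 : (1 - p n)^M ≤ Real.exp (1 - 3*lam) := by
      have hexp1 : 1 - p n ≤ Real.exp (-(p n)) := by
        have := Real.add_one_le_exp (-(p n)); linarith
      calc (1 - p n)^M ≤ (Real.exp (-(p n)))^M := pow_le_pow_left₀ h1p0 hexp1 M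
        _ = Real.exp ((M:ℝ) * (-(p n))) := (Real.exp_nat_mul _ M).symm
        _ ≤ Real.exp (1 - 3*lam) := Real.exp_le_exp.mpr (by linarith only [hpM])
    -- rpow identities
    have hrn : (n:ℝ) ^ (-(3/2) : ℝ) = Real.exp (L * (-(3/2))) := by
      rw [Real.rpow_def_of_pos hn0, ← hLdef]
    have hrL : L ^ (-(3/2) : ℝ) = Real.exp (LL * (-(3/2))) := by
      rw [Real.rpow_def_of_pos hL0, ← hLLdef]
    have hB4 : Real.exp (1 - 3*lam)
        = Real.exp 1 * Real.exp (-(3*w)) * ((n:ℝ) ^ (-(3/2):ℝ) * L ^ (-(3/2):ℝ)) := by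
      rw [hrn, hrL, ← Real.exp_add, ← Real.exp_add, ← Real.exp_add]
      congr 1
      rw [hlamdef]; ring
    have hgpos : (0:ℝ) < (n : ℝ) ^ (-(1 / 2 : ℝ)) * L ^ (-(1 / 2 : ℝ)) :=
      mul_pos (Real.rpow_pos_of_pos hn0 _) (Real.rpow_pos_of_pos hL0 _)
    refine ⟨hexp_nonneg hp0 hp1 (fun E => Nat.cast_nonneg _), ?_, hgpos⟩
    have hGB := global_bound n k (p n) hp0 hp1 hk
    rw [← hMdef] at hGB
    have hnn : (n:ℝ) * (n:ℝ)^(-(3/2):ℝ) = (n:ℝ)^(-(1/2):ℝ) := by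
      rw [show ((n:ℝ) * (n:ℝ)^(-(3/2):ℝ)) = (n:ℝ)^((1:ℝ)) * (n:ℝ)^(-(3/2):ℝ) by
        rw [Real.rpow_one], ← Real.rpow_add hn0]
      norm_num
    have hLL2 : L * L^(-(3/2):ℝ) = L^(-(1/2):ℝ) := by
      rw [show (L * L^(-(3/2):ℝ)) = L^((1:ℝ)) * L^(-(3/2):ℝ) by rw [Real.rpow_one],
        ← Real.rpow_add hL0]
      norm_num
    have hcancel : (n:ℝ)^3 * (n:ℝ)^(k-3) = (n:ℝ)^(k-1) * (n:ℝ) := by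
      rw [← pow_add, ← pow_succ]
      congr 1
      omega
    calc hexp n k (p n) (fun E => (tripleCount n E : ℝ))
        ≤ (n : ℝ) ^ 3 * ((Nat.choose n (k - 3) : ℝ) * (p n * (1 - p n) ^ M)) := hGB
      _ ≤ (n : ℝ) ^ 3 * ((n:ℝ)^(k-3)
            * ((lam * (Nat.factorial (k-1) : ℝ) * 2^(k-1) / (n:ℝ)^(k-1))
              * Real.exp (1 - 3*lam))) := by
          have hq0 : (0:ℝ) ≤ lam * (Nat.factorial (k-1) : ℝ) * 2^(k-1) / (n:ℝ)^(k-1) := by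
            apply div_nonneg _ (by positivity)
            exact mul_nonneg (mul_nonneg hlam0 hfacpos.le) (by positivity)
          have t1 : p n * (1 - p n)^M
              ≤ (lam * (Nat.factorial (k-1) : ℝ) * 2^(k-1) / (n:ℝ)^(k-1))
                * Real.exp (1 - 3*lam) :=
            mul_le_mul hB2 hB3 (pow_nonneg h1p0 M) hq0
          have t2 := mul_le_mul hB1 t1 (mul_nonneg hp0 (pow_nonneg h1p0 M)) (by positivity)
          exact mul_le_mul_of_nonneg_left t2 (by positivity)
      _ = C * ((n:ℝ) * (n:ℝ)^(-(3/2):ℝ)) * (lam * L^(-(3/2):ℝ)) := by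
          have hcancel2 : (n:ℝ)^3 * (n:ℝ)^(k-3) / (n:ℝ)^(k-1) = (n:ℝ) := by
            rw [hcancel, mul_comm, mul_div_assoc, div_self (pow_ne_zero _ hn0.ne'), mul_one]
          rw [hB4]
          rw [show (n:ℝ)^3 * ((n:ℝ)^(k-3) * ((lam * (Nat.factorial (k-1) : ℝ) * 2^(k-1)
                / (n:ℝ)^(k-1)) * (Real.exp 1 * Real.exp (-(3*w))
                  * ((n:ℝ)^(-(3/2):ℝ) * L^(-(3/2):ℝ)))))
              = ((n:ℝ)^3 * (n:ℝ)^(k-3) / (n:ℝ)^(k-1)) * (lam * (Nat.factorial (k-1) : ℝ)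
                * 2^(k-1) * (Real.exp 1 * Real.exp (-(3*w))
                  * ((n:ℝ)^(-(3/2):ℝ) * L^(-(3/2):ℝ)))) from by ring]
          rw [hcancel2, hCdef]
          ring
      _ ≤ C * ((n:ℝ) * (n:ℝ)^(-(3/2):ℝ)) * (L * L^(-(3/2):ℝ)) := by
          refine mul_le_mul_of_nonneg_left
            (mul_le_mul_of_nonneg_right hlamL (Real.rpow_nonneg hL0.le _)) ?_
          exact mul_nonneg hCpos.le (mul_nonneg hn0.le (Real.rpow_nonneg hn0.le _))
      _ = C * ((n : ℝ) ^ (-(1 / 2 : ℝ)) * L ^ (-(1 / 2 : ℝ))) := by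
          rw [hnn, hLL2]; ring
  have hgt : Tendsto (fun n : ℕ => C * ((n : ℝ) ^ (-(1 / 2 : ℝ))
      * Real.log n ^ (-(1 / 2 : ℝ)))) atTop (nhds 0) := by
    have t1 : Tendsto (fun x : ℝ => x ^ (-(1/2 : ℝ))) atTop (nhds 0) := by
      have := tendsto_rpow_neg_atTop (by norm_num : (0:ℝ) < 1/2)
      simpa using this
    have tn : Tendsto (fun n : ℕ => (n:ℝ) ^ (-(1/2:ℝ))) atTop (nhds 0) :=
      t1.comp tendsto_natCast_atTop_atTop
    have tl : Tendsto (fun n : ℕ => (Real.log n) ^ (-(1/2:ℝ))) atTop (nhds 0) :=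
      t1.comp (Real.tendsto_log_atTop.comp tendsto_natCast_atTop_atTop)
    have := (tn.mul tl).const_mul C
    simpa using this
  have hT2 : Tendsto (fun n => hexp n k (p n) (fun E => (tripleCount n E : ℝ)))
      atTop (nhds 0) :=
    squeeze_zero' (key.mono fun n h => h.1) (key.mono fun n h => h.2.1) hgt
  refine ⟨?_, hT2, ?_⟩
  · rw [isBigO_iff]
    refine ⟨C, ?_⟩
    filter_upwards [key] with n hn
    obtain ⟨hf0, hfle, hg0⟩ := hn
    rw [Real.norm_eq_abs, Real.norm_eq_abs, abs_of_nonneg hf0, abs_of_nonneg hg0.le]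
    exact hfle
  · have h0 : ∀ᶠ n : ℕ in atTop,
        0 ≤ hprob n k (p n) (fun E => 1 ≤ tripleCount n E) :=
      hp.mono fun n hpn => hprob_nonneg hpn.1 hpn.2 _
    have hm : ∀ᶠ n : ℕ in atTop,
        hprob n k (p n) (fun E => 1 ≤ tripleCount n E)
          ≤ hexp n k (p n) (fun E => (tripleCount n E : ℝ)) :=
      hp.mono fun n hpn => markov hpn.1 hpn.2 _
    exact squeeze_zero' h0 hm hT2
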